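/- Let Q be a commutative nontrivial ZDF involutive quantale, X a set, and A a commutative von Neumann unital *-subsemialgebra of Hom(X,X). The map ξ_A : Spec_G(A) → Spec_P(A) sending a character ρ to its kernel ker ρ is well-defined and surjective, it is a topological quotient map for the Zariski topologies, and ξ_A(ρ₁) = ξ_A(ρ₂) holds if and only if ρ₁ and ρ₂ are topologically indistinguishable in the Zariski topology on Spec_G(A) (every open set contains ρ₁ if and only if it contains ρ₂). -/

import Mathlib

open Classical

noncomputable section

universe u v

/-- A commutative involutive quantale: a complete lattice with a commutative
monoid operation distributing over arbitrary joins, together with a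
join-preserving involution compatible with multiplication and unit. -/
structure CommInvQuantale (Q : Type u) [CompleteLattice Q] : Type u where
  mul : Q → Q → Q
  one : Q
  mul_comm : ∀ a b : Q, mul a b = mul b a
  mul_assoc : ∀ a b c : Q, mul (mul a b) c = mul a (mul b c)
  one_mul : ∀ a : Q, mul one a = a
  mul_sSup : ∀ (a : Q) (S : Set Q), mul a (sSup S) = ⨆ y ∈ S, mul a y
  inv : Q → Q
  inv_inv : ∀ a : Q, inv (inv a) = a
  inv_sSup : ∀ S : Set Q, inv (sSup S) = ⨆ y ∈ S, inv y
  inv_mul : ∀ a b : Q, inv (mul a b) = mul (inv a) (inv b)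
  inv_one : inv one = one

namespace CommInvQuantale

variable {Q : Type u} [CompleteLattice Q] {X : Type v}

/-- Zero-divisor free: `x·y = 0` implies `x = 0` or `y = 0` (where `0 = ⊥`). -/
def ZDF (Qd : CommInvQuantale Q) : Prop :=
  ∀ a b : Q, Qd.mul a b = ⊥ → a = ⊥ ∨ b = ⊥

/-- Nontrivial: `1 ≠ 0`. -/
def NontrivialQ (Qd : CommInvQuantale Q) : Prop := Qd.one ≠ (⊥ : Q)

/-- The zero `Q`-relation. -/
def qzero : X → X → Q := fun _ _ => (⊥ : Q)

/-- The support of a `Q`-relation. -/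
def supp (f : X → X → Q) : Set X := {x | ∃ y, f x y ≠ (⊥ : Q)}

/-- The cosupport of a `Q`-relation. -/
def cosupp (f : X → X → Q) : Set X := {x | ∃ y, f y x ≠ (⊥ : Q)}

/-- The kernel of a character of `A`. -/
def kerChar (A : Set (X → X → Q)) (ρ : (X → X → Q) → Q) : Set (X → X → Q) :=
  {f ∈ A | ρ f = (⊥ : Q)}

/-- The map `w : Q → 2` sending `0` to `0` and every nonzero element to `1`
(with `2` modelled by `Bool`). -/
def wmap : Q → Bool := fun q => if q = (⊥ : Q) then false else true

/-- The kernel of a homomorphism `γ : A → 2` (with `2` modelled by `Bool`). -/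
def kerTwo (A : Set (X → X → Q)) (γ : (X → X → Q) → Bool) : Set (X → X → Q) :=
  {f ∈ A | γ f = false}

variable (Qd : CommInvQuantale Q)

/-- Composition of `Q`-relations: `(f ∘ g)(x,z) = ⋁_y g(x,y) · f(y,z)`,
so `qcomp Qd f g` is "`f` after `g`". -/
def qcomp (f g : X → X → Q) : X → X → Q := fun x z => ⨆ y : X, Qd.mul (g x y) (f y z)

/-- The identity `Q`-relation. -/
def qid : X → X → Q := fun x y => if x = y then Qd.one else ⊥

/-- The dagger of a `Q`-relation: `f†(x,y) = f(y,x)*`. -/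
def qdag (f : X → X → Q) : X → X → Q := fun x y => Qd.inv (f y x)

/-- Scalar multiplication of a `Q`-relation: `(q•f)(x,y) = q·f(x,y)`. -/
def qsmul (q : Q) (f : X → X → Q) : X → X → Q := fun x y => Qd.mul q (f x y)

/-- A commutative unital *-subsemialgebra of `Hom(X,X)`: contains the zero and
identity relations, closed under pointwise binary join, composition, scalar
multiplication and dagger, and composition is commutative on it. -/
structure IsSubalg (A : Set (X → X → Q)) : Prop where
  zero_mem : qzero ∈ A
  id_mem : Qd.qid ∈ A
  sup_mem : ∀ f ∈ A, ∀ g ∈ A, f ⊔ g ∈ A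
  comp_mem : ∀ f ∈ A, ∀ g ∈ A, Qd.qcomp f g ∈ A
  smul_mem : ∀ (q : Q), ∀ f ∈ A, Qd.qsmul q f ∈ A
  dag_mem : ∀ f ∈ A, Qd.qdag f ∈ A
  comp_comm : ∀ f ∈ A, ∀ g ∈ A, Qd.qcomp f g = Qd.qcomp g f

/-- The commutant of a set of `Q`-relations. -/
def commutant (B : Set (X → X → Q)) : Set (X → X → Q) :=
  { f | ∀ g ∈ B, Qd.qcomp f g = Qd.qcomp g f }

/-- A commutative von Neumann unital *-subsemialgebra: a commutative unital
*-subsemialgebra equal to its double commutant. -/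
def IsVN (A : Set (X → X → Q)) : Prop :=
  Qd.IsSubalg A ∧ Qd.commutant (Qd.commutant A) = A

/-- A character of `A`: a map `ρ : Hom(X,X) → Q` with `ρ(0) = 0`, `ρ(id) = 1`,
preserving binary joins, composition and dagger on `A`. -/
structure IsChar (A : Set (X → X → Q)) (ρ : (X → X → Q) → Q) : Prop where
  map_zero : ρ qzero = (⊥ : Q)
  map_id : ρ Qd.qid = Qd.one
  map_sup : ∀ f ∈ A, ∀ g ∈ A, ρ (f ⊔ g) = ρ f ⊔ ρ g
  map_comp : ∀ f ∈ A, ∀ g ∈ A, ρ (Qd.qcomp f g) = Qd.mul (ρ f) (ρ g)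
  map_dag : ∀ f ∈ A, ρ (Qd.qdag f) = Qd.inv (ρ f)

/-- An ideal of `A`. -/
structure IsIdeal (A J : Set (X → X → Q)) : Prop where
  subset : J ⊆ A
  zero_mem : qzero ∈ J
  sup_mem : ∀ a ∈ J, ∀ b ∈ J, a ⊔ b ∈ J
  absorb : ∀ f ∈ A, ∀ a ∈ J, Qd.qcomp f a ∈ J

/-- A prime k*-ideal of `A`: a proper prime ideal which is a k-ideal closed
under dagger. -/
structure IsPrimeKStarIdeal (A J : Set (X → X → Q)) : Prop where
  ideal : Qd.IsIdeal A J
  proper : J ≠ A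
  prime : ∀ f ∈ A, ∀ g ∈ A, Qd.qcomp f g ∈ J → f ∈ J ∨ g ∈ J
  kideal : ∀ a ∈ J, ∀ b ∈ A, a ⊔ b ∈ J → b ∈ J
  dag_mem : ∀ a ∈ J, Qd.qdag a ∈ J

/-- A global section of the Gelfand spectrum over `X`: an assignment of a
character to every commutative von Neumann unital *-subsemialgebra of
`Hom(X,X)`, compatible with restriction along inclusions. -/
def IsGelfandGlobalSection (ρ : Set (X → X → Q) → (X → X → Q) → Q) : Prop :=
  (∀ A : Set (X → X → Q), Qd.IsVN A → Qd.IsChar A (ρ A)) ∧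
  (∀ A B : Set (X → X → Q), Qd.IsVN A → Qd.IsVN B → A ⊆ B → ∀ f ∈ A, ρ A f = ρ B f)

/-- A global section of the prime spectrum over `X`: an assignment of a prime
k*-ideal to every commutative von Neumann unital *-subsemialgebra of
`Hom(X,X)`, compatible with restriction along inclusions. -/
def IsPrimeGlobalSection (χ : Set (X → X → Q) → Set (X → X → Q)) : Prop :=
  (∀ A : Set (X → X → Q), Qd.IsVN A → Qd.IsPrimeKStarIdeal A (χ A)) ∧
  (∀ A B : Set (X → X → Q), Qd.IsVN A → Qd.IsVN B → A ⊆ B → χ A = A ∩ χ B)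

/-- An idempotent element of `A`. -/
def IsIdem (A : Set (X → X → Q)) (p : X → X → Q) : Prop :=
  p ∈ A ∧ Qd.qcomp p p = p

/-- A subunital idempotent of `A`: an idempotent with an orthogonal idempotent
complement summing to the identity. -/
def IsSubunital (A : Set (X → X → Q)) (p : X → X → Q) : Prop :=
  Qd.IsIdem A p ∧ ∃ q, Qd.IsIdem A q ∧ Qd.qcomp p q = qzero ∧ p ⊔ q = Qd.qid

/-- A primitive subunital idempotent of `A`. -/
def IsPrimitive (A : Set (X → X → Q)) (p : X → X → Q) : Prop :=
  Qd.IsSubunital A p ∧ p ≠ qzero ∧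
    ¬ ∃ s t, Qd.IsSubunital A s ∧ s ≠ qzero ∧ Qd.IsSubunital A t ∧ t ≠ qzero ∧
      Qd.qcomp s t = qzero ∧ s ⊔ t = p

/-- The unique quantale map `! : 2 → Q` (with `2` modelled by `Bool`). -/
def bang : Bool → Q := fun b => if b then Qd.one else ⊥

/-- A homomorphism `γ : A → 2` (with `2` the two-element quantale, modelled by
`Bool` with join `||` and multiplication `&&`, trivial involution). -/
structure IsTwoHom (A : Set (X → X → Q)) (γ : (X → X → Q) → Bool) : Prop where
  map_zero : γ qzero = false
  map_id : γ Qd.qid = true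
  map_sup : ∀ f ∈ A, ∀ g ∈ A, γ (f ⊔ g) = (γ f || γ g)
  map_comp : ∀ f ∈ A, ∀ g ∈ A, γ (Qd.qcomp f g) = (γ f && γ g)
  map_dag : ∀ f ∈ A, γ (Qd.qdag f) = γ f

/-- The Gelfand spectrum of `A`: the set of characters of `A`. -/
def SpecG (A : Set (X → X → Q)) : Type (max u v) :=
  {ρ : (X → X → Q) → Q // Qd.IsChar A ρ}

/-- The prime spectrum of `A`: the set of prime k*-ideals of `A`. -/
def SpecP (A : Set (X → X → Q)) : Type (max u v) :=
  {J : Set (X → X → Q) // Qd.IsPrimeKStarIdeal A J}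

/-- The Zariski topology on the Gelfand spectrum, with basic closed sets
`V_G(J) = {ρ | J ⊆ ker ρ}` for ideals `J` of `A`. -/
def zariskiG (A : Set (X → X → Q)) : TopologicalSpace (Qd.SpecG A) :=
  TopologicalSpace.generateFrom
    {U | ∃ J : Set (X → X → Q), Qd.IsIdeal A J ∧
      U = {ρ : Qd.SpecG A | J ⊆ kerChar A ρ.1}ᶜ}

/-- The Zariski topology on the prime spectrum, with basic closed sets
`V_P(J) = {K | J ⊆ K}` for ideals `J` of `A`. -/
def zariskiP (A : Set (X → X → Q)) : TopologicalSpace (Qd.SpecP A) :=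
  TopologicalSpace.generateFrom
    {U | ∃ J : Set (X → X → Q), Qd.IsIdeal A J ∧
      U = {K : Qd.SpecP A | J ⊆ K.1}ᶜ}

/-! ### Auxiliary lemmas -/

lemma mul_bot' (Qd : CommInvQuantale Q) (a : Q) : Qd.mul a ⊥ = ⊥ := by
  simpa using Qd.mul_sSup a ∅

lemma bot_mul' (Qd : CommInvQuantale Q) (a : Q) : Qd.mul ⊥ a = ⊥ := by
  rw [Qd.mul_comm]; exact Qd.mul_bot' a

lemma inv_bot' (Qd : CommInvQuantale Q) : Qd.inv (⊥ : Q) = ⊥ := by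
  simpa using Qd.inv_sSup ∅

lemma qcomp_qid' (Qd : CommInvQuantale Q) (f : X → X → Q) :
    Qd.qcomp f Qd.qid = f := by
  funext x z
  show (⨆ y : X, Qd.mul (Qd.qid x y) (f y z)) = f x z
  apply le_antisymm
  · apply iSup_le
    intro y
    by_cases h : x = y
    · subst h; rw [qid, if_pos rfl, Qd.one_mul]
    · rw [qid, if_neg h, Qd.bot_mul']; exact bot_le
  · exact le_iSup_of_le x (by rw [qid, if_pos rfl, Qd.one_mul])

lemma qdag_qdag' (Qd : CommInvQuantale Q) (f : X → X → Q) :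
    Qd.qdag (Qd.qdag f) = f := by
  funext x y; show Qd.inv (Qd.inv (f x y)) = f x y; rw [Qd.inv_inv]

/-- The kernel of a character is a prime k*-ideal. -/
lemma ker_isPrimeKStarIdeal (Qd : CommInvQuantale Q) (hZDF : Qd.ZDF)
    (hNT : Qd.NontrivialQ) {A : Set (X → X → Q)} (hS : Qd.IsSubalg A)
    {ρ : (X → X → Q) → Q} (hρ : Qd.IsChar A ρ) :
    Qd.IsPrimeKStarIdeal A (kerChar A ρ) := by
  refine ⟨⟨fun f hf => hf.1, ⟨hS.zero_mem, hρ.map_zero⟩, ?_, ?_⟩, ?_, ?_, ?_, ?_⟩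
  · intro a ha b hb
    exact ⟨hS.sup_mem a ha.1 b hb.1, by
      rw [hρ.map_sup a ha.1 b hb.1, ha.2, hb.2, sup_idem]⟩
  · intro f hf a ha
    exact ⟨hS.comp_mem f hf a ha.1, by
      rw [hρ.map_comp f hf a ha.1, ha.2, Qd.mul_bot']⟩
  · intro h
    have hid : Qd.qid ∈ kerChar A ρ := h.symm ▸ hS.id_mem
    exact hNT (by rw [← hρ.map_id]; exact hid.2)
  · intro f hf g hg hfg
    have h0 : Qd.mul (ρ f) (ρ g) = ⊥ := by
      rw [← hρ.map_comp f hf g hg]; exact hfg.2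
    rcases hZDF _ _ h0 with h | h
    · exact Or.inl ⟨hf, h⟩
    · exact Or.inr ⟨hg, h⟩
  · intro a ha b hb hab
    refine ⟨hb, ?_⟩
    have : ρ a ⊔ ρ b = ⊥ := by rw [← hρ.map_sup a ha.1 b hb]; exact hab.2
    exact le_bot_iff.mp (le_sup_right.trans_eq this)
  · intro a ha
    exact ⟨hS.dag_mem a ha.1, by rw [hρ.map_dag a ha.1, ha.2, Qd.inv_bot']⟩

/-- Every prime k*-ideal is the kernel of a character. -/
lemma exists_char_of_primeIdeal (Qd : CommInvQuantale Q)
    (hNT : Qd.NontrivialQ) {A : Set (X → X → Q)} (hS : Qd.IsSubalg A)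
    {J : Set (X → X → Q)} (hJ : Qd.IsPrimeKStarIdeal A J) :
    ∃ ρ : (X → X → Q) → Q, Qd.IsChar A ρ ∧ kerChar A ρ = J := by
  classical
  set ρ : (X → X → Q) → Q := fun f => if f ∈ J then ⊥ else Qd.one with hρdef
  have hidJ : Qd.qid ∉ J := by
    intro h
    apply hJ.proper
    refine Set.Subset.antisymm hJ.ideal.subset (fun f hf => ?_)
    have := hJ.ideal.absorb f hf Qd.qid h
    rwa [Qd.qcomp_qid'] at this
  have hsupJ : ∀ f ∈ A, ∀ g ∈ A, (f ⊔ g ∈ J ↔ f ∈ J ∧ g ∈ J) := by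
    intro f hf g hg
    constructor
    · intro h
      constructor
      · exact hJ.kideal _ h f hf (by rw [sup_right_comm, sup_idem]; exact h)
      · exact hJ.kideal _ h g hg (by rw [sup_assoc, sup_idem]; exact h)
    · intro ⟨h1, h2⟩; exact hJ.ideal.sup_mem f h1 g h2
  have hdagJ : ∀ f ∈ A, (Qd.qdag f ∈ J ↔ f ∈ J) := by
    intro f hf
    constructor
    · intro h
      have := hJ.dag_mem _ h
      rwa [Qd.qdag_qdag'] at this
    · exact hJ.dag_mem f
  have hcompJ : ∀ f ∈ A, ∀ g ∈ A, (Qd.qcomp f g ∈ J ↔ f ∈ J ∨ g ∈ J) := by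
    intro f hf g hg
    constructor
    · exact hJ.prime f hf g hg
    · rintro (h | h)
      · rw [hS.comp_comm f hf g hg]; exact hJ.ideal.absorb g hg f h
      · exact hJ.ideal.absorb f hf g h
  refine ⟨ρ, ⟨?_, ?_, ?_, ?_, ?_⟩, ?_⟩
  · simp only [hρdef, if_pos hJ.ideal.zero_mem]
  · simp only [hρdef, if_neg hidJ]
  · intro f hf g hg
    simp only [hρdef, hsupJ f hf g hg]
    by_cases h1 : f ∈ J <;> by_cases h2 : g ∈ J <;>
      simp [h1, h2]
  · intro f hf g hg
    simp only [hρdef, hcompJ f hf g hg]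
    by_cases h1 : f ∈ J <;> by_cases h2 : g ∈ J <;>
      simp [h1, h2, Qd.mul_bot', Qd.bot_mul', Qd.one_mul]
  · intro f hf
    simp only [hρdef, hdagJ f hf]
    by_cases h : f ∈ J <;> simp [h, Qd.inv_bot', Qd.inv_one]
  · ext f
    constructor
    · rintro ⟨hfA, hv⟩
      by_cases h : f ∈ J
      · exact h
      · rw [hρdef] at hv; simp only [if_neg h] at hv; exact absurd hv hNT
    · intro h
      exact ⟨hJ.ideal.subset h, by simp only [hρdef, if_pos h]⟩

/-- The map `ξ_A : Spec_G(A) → Spec_P(A)`, `ρ ↦ ker ρ`, is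
well-defined and surjective, is a topological quotient map for the Zariski
topologies, and identifies exactly the topologically indistinguishable
characters. -/
theorem kernel_map_is_quotient
    (Qd : CommInvQuantale Q) (hZDF : Qd.ZDF) (hNT : Qd.NontrivialQ)
    (X : Type v) (A : Set (X → X → Q)) (hA : Qd.IsVN A) :
    ∃ F : Qd.SpecG A → Qd.SpecP A,
      (∀ ρ : Qd.SpecG A, (F ρ).1 = kerChar A ρ.1) ∧
      Function.Surjective F ∧
      @Topology.IsQuotientMap _ _ (Qd.zariskiG A) (Qd.zariskiP A) F ∧
      (∀ ρ₁ ρ₂ : Qd.SpecG A, F ρ₁ = F ρ₂ ↔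
        @Inseparable _ (Qd.zariskiG A) ρ₁ ρ₂) := by
  classical
  letI tG : TopologicalSpace (Qd.SpecG A) := Qd.zariskiG A
  letI tP : TopologicalSpace (Qd.SpecP A) := Qd.zariskiP A
  set SG : Set (Set (Qd.SpecG A)) :=
    {U | ∃ J : Set (X → X → Q), Qd.IsIdeal A J ∧
      U = {ρ : Qd.SpecG A | J ⊆ kerChar A ρ.1}ᶜ} with hSG
  set SP : Set (Set (Qd.SpecP A)) :=
    {U | ∃ J : Set (X → X → Q), Qd.IsIdeal A J ∧
      U = {K : Qd.SpecP A | J ⊆ K.1}ᶜ} with hSP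
  set F : Qd.SpecG A → Qd.SpecP A := fun ρ =>
    ⟨kerChar A ρ.1, Qd.ker_isPrimeKStarIdeal hZDF hNT hA.1 ρ.2⟩ with hF
  have hFval : ∀ ρ : Qd.SpecG A, (F ρ).1 = kerChar A ρ.1 := fun _ => rfl
  -- surjectivity
  have hsurj : Function.Surjective F := by
    intro K
    obtain ⟨ρ, hρ, hker⟩ := Qd.exists_char_of_primeIdeal hNT hA.1 K.2
    exact ⟨⟨ρ, hρ⟩, Subtype.ext hker⟩
  -- the Zariski topology on Spec_G is induced from Spec_P via F
  have hgen : SG = Set.preimage F '' SP := by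
    ext U
    constructor
    · rintro ⟨J, hJ, rfl⟩
      exact ⟨{K : Qd.SpecP A | J ⊆ K.1}ᶜ, ⟨J, hJ, rfl⟩, rfl⟩
    · rintro ⟨V, ⟨J, hJ, rfl⟩, rfl⟩
      exact ⟨J, hJ, rfl⟩
  have hind : tG = TopologicalSpace.induced F tP := by
    show Qd.zariskiG A = TopologicalSpace.induced F (Qd.zariskiP A)
    rw [zariskiG, zariskiP, induced_generateFrom_eq]
    exact congrArg TopologicalSpace.generateFrom hgen
  -- quotient map
  have hquot : @Topology.IsQuotientMap _ _ tG tP F := by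
    refine ⟨⟨?_⟩, hsurj⟩
    rw [hind]
    refine TopologicalSpace.ext_iff.mpr fun s => ?_
    rw [isOpen_coinduced]
    letI := TopologicalSpace.induced F tP
    rw [isOpen_induced_iff]
    constructor
    · intro h; exact ⟨s, h, rfl⟩
    · rintro ⟨t, ht, he⟩
      have : t = s := Set.preimage_injective.mpr hsurj he
      rwa [← this]
  refine ⟨F, hFval, hsurj, hquot, ?_⟩
  intro ρ₁ ρ₂
  constructor
  · intro h
    have hker : kerChar A ρ₁.1 = kerChar A ρ₂.1 := congrArg Subtype.val h
    rw [inseparable_iff_forall_isOpen]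
    intro s hs
    have hs' : TopologicalSpace.GenerateOpen SG s := hs
    clear hs
    induction hs' with
    | basic U hU =>
      obtain ⟨J, hJ, rfl⟩ := hU
      simp only [Set.mem_compl_iff, Set.mem_setOf_eq, hker]
    | univ => simp
    | inter U V _ _ ihU ihV =>
      exact and_congr ihU ihV
    | sUnion S _ ih =>
      simp only [Set.mem_sUnion]
      exact ⟨fun ⟨t, ht, hm⟩ => ⟨t, ht, (ih t ht).mp hm⟩,
        fun ⟨t, ht, hm⟩ => ⟨t, ht, (ih t ht).mpr hm⟩⟩
  · intro h
    have key : ∀ σ τ : Qd.SpecG A, @Inseparable _ tG σ τ →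
        kerChar A τ.1 ⊆ kerChar A σ.1 := by
      intro σ τ hst
      have hJ : Qd.IsIdeal A (kerChar A τ.1) :=
        (Qd.ker_isPrimeKStarIdeal hZDF hNT hA.1 τ.2).ideal
      have hopen : IsOpen ({ρ : Qd.SpecG A | kerChar A τ.1 ⊆ kerChar A ρ.1}ᶜ) :=
        TopologicalSpace.GenerateOpen.basic _ ⟨kerChar A τ.1, hJ, rfl⟩
      have := (inseparable_iff_forall_isOpen.mp hst) _ hopen
      by_contra hns
      exact (this.mp hns) (fun f hf => hf)
    exact Subtype.ext (Set.Subset.antisymm (key ρ₂ ρ₁ h.symm) (key ρ₁ ρ₂ h))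

end CommInvQuantale
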